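/- Let n ≥ 5. If [-,-] is a Lie bracket on μ₀ⁿ making (μ₀ⁿ, ·, [-,-]) a transposed 1-Poisson algebra, and α₁,…,αₙ ∈ ℂ are the coordinates of [e₁,e₂] in the basis e₁,…,eₙ (that is, [e₁,e₂] = Σ_{t=1}^n αₜ eₜ), then [e₁, eᵢ] = Σ_{t=i−1}^n α_{t−i+2} eₜ for all 2 ≤ i ≤ n. -/
import Mathlib


open Finset

/-- The null-filiform associative multiplication on `ℂⁿ = Fin n → ℂ`.
The basis vector `e_i` (1-based) corresponds to the coordinate `i - 1`, and
`e_i · e_j = e_{i+j}` if `i + j ≤ n`, and `0` otherwise. -/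
noncomputable def nfMul (n : ℕ) (x y : Fin n → ℂ) : Fin n → ℂ :=
  fun k => ∑ i : Fin n, ∑ j : Fin n,
    if (i : ℕ) + (j : ℕ) + 1 = (k : ℕ) then x i * y j else 0

/-- The 1-based basis vector `e i` of `ℂⁿ` (zero if `i` is out of range `1,…,n`). -/
noncomputable def nfE (n : ℕ) (i : ℕ) : Fin n → ℂ :=
  fun k => if (k : ℕ) + 1 = i then 1 else 0

/-- The coefficient of the basis vector `e i` (1-based) in `x`. -/
noncomputable def nfCoeff (n : ℕ) (x : Fin n → ℂ) (i : ℕ) : ℂ :=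
  ∑ k : Fin n, if (k : ℕ) + 1 = i then x k else 0

/-- A Lie bracket (bilinear, alternating, satisfying the Jacobi identity)
on a complex vector space. -/
structure LieBracketOn (L : Type*) [AddCommGroup L] [Module ℂ L] where
  br : L → L → L
  add_left : ∀ x y z, br (x + y) z = br x z + br y z
  smul_left : ∀ (c : ℂ) (x y : L), br (c • x) y = c • br x y
  add_right : ∀ x y z, br x (y + z) = br x y + br x z
  smul_right : ∀ (c : ℂ) (x y : L), br x (c • y) = c • br x y
  alt : ∀ x, br x x = 0
  jacobi : ∀ x y z, br (br x y) z + br (br y z) x + br (br z x) y = 0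

/-- `(μ₀ⁿ, ·, [-,-])` is a transposed `δ`-Poisson algebra:
`δ • (z · [x,y]) = [z·x, y] + [x, z·y]`. -/
noncomputable def IsTransposedPoisson (n : ℕ) (δ : ℂ) (B : LieBracketOn (Fin n → ℂ)) : Prop :=
  ∀ x y z, δ • nfMul n z (B.br x y) = B.br (nfMul n z x) y + B.br x (nfMul n z y)

/-- `(μ₀ⁿ, ·, [-,-])` is a `δ`-Poisson algebra:
`[x, y·z] = δ • ([x,y]·z + y·[x,z])`. -/
noncomputable def IsDeltaPoisson (n : ℕ) (δ : ℂ) (B : LieBracketOn (Fin n → ℂ)) : Prop :=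
  ∀ x y z, B.br x (nfMul n y z) = δ • (nfMul n (B.br x y) z + nfMul n y (B.br x z))

/-- The bracket of the transposed 0-Poisson algebra `TP₀(α₁,…,αₙ)` on `μ₀ⁿ`:
determined by `[e₁,e₂] = ∑_{t=1}^n αₜ eₜ` and `[eᵢ,eⱼ] = 0` for all other
pairs `i < j`. -/
noncomputable def brTP0 (n : ℕ) (α : ℕ → ℂ) (x y : Fin n → ℂ) : Fin n → ℂ :=
  (nfCoeff n x 1 * nfCoeff n y 2 - nfCoeff n x 2 * nfCoeff n y 1) •
    ∑ t ∈ Finset.Icc 1 n, α t • nfE n t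

/-- The bracket of the transposed 1-Poisson algebra `TP₁(α₂,…,αₙ)` on `μ₀ⁿ`:
determined by `[e₁,eᵢ] = ∑_{t=i}^n α_{t-i+2} eₜ` for `2 ≤ i ≤ n` and
`[eᵢ,eⱼ] = 0` for `2 ≤ i < j ≤ n`. -/
noncomputable def brTP1 (n : ℕ) (α : ℕ → ℂ) (x y : Fin n → ℂ) : Fin n → ℂ :=
  ∑ i ∈ Finset.Icc 2 n,
    (nfCoeff n x 1 * nfCoeff n y i - nfCoeff n x i * nfCoeff n y 1) •
      ∑ t ∈ Finset.Icc i n, α (t + 2 - i) • nfE n t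

/-- The bracket of the transposed `δ`-Poisson algebra `TP_δ(a, b, c)`
(`a = α_{n-2}`, `b = α_{n-1}`, `c = αₙ`) on `μ₀ⁿ`: determined by
`[e₁,e₂] = a e_{n-2} + b e_{n-1} + c eₙ`, `[e₁,e₃] = δ(a e_{n-1} + b eₙ)`,
`[e₂,e₃] = ((δ²-δ)/2) a eₙ`, `[e₁,e₄] = ((δ²+δ)/2) a eₙ`, and `[eᵢ,eⱼ] = 0`
for all other pairs `i < j`. -/
noncomputable def brTPd (n : ℕ) (δ a b c : ℂ) (x y : Fin n → ℂ) : Fin n → ℂ :=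
  (nfCoeff n x 1 * nfCoeff n y 2 - nfCoeff n x 2 * nfCoeff n y 1) •
      (a • nfE n (n-2) + b • nfE n (n-1) + c • nfE n n)
  + (nfCoeff n x 1 * nfCoeff n y 3 - nfCoeff n x 3 * nfCoeff n y 1) •
      (δ • (a • nfE n (n-1) + b • nfE n n))
  + (nfCoeff n x 2 * nfCoeff n y 3 - nfCoeff n x 3 * nfCoeff n y 2) •
      (((δ^2 - δ)/2 * a) • nfE n n)
  + (nfCoeff n x 1 * nfCoeff n y 4 - nfCoeff n x 4 * nfCoeff n y 1) •
      (((δ^2 + δ)/2 * a) • nfE n n)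

/-- Two bracket structures on `μ₀ⁿ` are isomorphic (as transposed δ-Poisson
algebras): there is a linear bijection preserving both `·` and `[-,-]`. -/
noncomputable def TPIso (n : ℕ) (B B' : (Fin n → ℂ) → (Fin n → ℂ) → (Fin n → ℂ)) : Prop :=
  ∃ φ : (Fin n → ℂ) ≃ₗ[ℂ] (Fin n → ℂ),
    (∀ x y, φ (nfMul n x y) = nfMul n (φ x) (φ y)) ∧
    ∀ x y, φ (B x y) = B' (φ x) (φ y)

/-- for `n ≥ 5`, in any transposed `1`-Poisson structure on `μ₀ⁿ`
with `[e₁,e₂] = ∑_{t=1}^n αₜ eₜ`, one has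
`[e₁,eᵢ] = ∑_{t=i-1}^n α_{t-i+2} eₜ` for `2 ≤ i ≤ n`. -/
lemma nfMul_e_apply (n j : ℕ) (hj : 1 ≤ j) (y : Fin n → ℂ) (k : Fin n) :
    nfMul n (nfE n j) y k =
      if h : j ≤ (k : ℕ) then y ⟨(k : ℕ) - j, by omega⟩ else 0 := by
  unfold nfMul nfE
  simp only [ite_mul, one_mul, zero_mul]
  split_ifs with h
  · rw [Finset.sum_eq_single (⟨j - 1, by omega⟩ : Fin n)]
    · rw [Finset.sum_eq_single (⟨(k : ℕ) - j, by omega⟩ : Fin n)]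
      · rw [if_pos (by simp; omega), if_pos (by simp; omega)]
      · intro b _ hb
        refine if_neg fun hc => hb (Fin.ext ?_)
        simp at hc ⊢; omega
      · intro h'; exact absurd (Finset.mem_univ _) h'
    · intro a _ ha
      apply Finset.sum_eq_zero; intro b _
      split_ifs with h1 h2
      · exact absurd (Fin.ext (by simp; omega)) ha
      · rfl
      · rfl
    · intro h'; exact absurd (Finset.mem_univ _) h'
  · apply Finset.sum_eq_zero; intro a _
    apply Finset.sum_eq_zero; intro b _
    split_ifs with h1 h2
    · exact absurd (by omega : j ≤ (k : ℕ)) h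
    · rfl
    · rfl

lemma sum_smul_e_apply (n a : ℕ) (g : ℕ → ℂ) (k : Fin n) :
    (∑ t ∈ Finset.Icc a n, g t • nfE n t) k =
      if (k : ℕ) + 1 ∈ Finset.Icc a n then g ((k : ℕ) + 1) else 0 := by
  simp only [Finset.sum_apply, Pi.smul_apply, nfE, smul_eq_mul, mul_ite, mul_one, mul_zero]
  rw [Finset.sum_ite_eq]

lemma mul_e_e (n i j : ℕ) (hi : 1 ≤ i) (hj : 1 ≤ j) :
    nfMul n (nfE n i) (nfE n j) = nfE n (i + j) := by
  funext k
  rw [nfMul_e_apply n i hi]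
  unfold nfE
  simp only [Fin.val_mk]
  split_ifs with h h1 h2 <;> first | rfl | omega

lemma mul_e_sum (n j a : ℕ) (hj : 1 ≤ j) (ha : 1 ≤ a) (g : ℕ → ℂ) :
    nfMul n (nfE n j) (∑ t ∈ Finset.Icc a n, g t • nfE n t) =
      ∑ t ∈ Finset.Icc (a + j) n, g (t - j) • nfE n t := by
  funext k
  have hk := k.isLt
  rw [nfMul_e_apply n j hj]
  simp only [sum_smul_e_apply, Finset.mem_Icc, Fin.val_mk]
  split_ifs with h h1 h2 <;> first | rfl | (congr 1; omega) | omega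

lemma br_anticomm {n : ℕ} (B : LieBracketOn (Fin n → ℂ)) (x y : Fin n → ℂ) :
    B.br y x = - B.br x y := by
  have h := B.alt (x + y)
  rw [B.add_left, B.add_right, B.add_right, B.alt, B.alt] at h
  rw [zero_add, add_zero] at h
  exact eq_neg_of_add_eq_zero_right h

theorem stmt_3 (n : ℕ) (hn : 5 ≤ n)
    (B : LieBracketOn (Fin n → ℂ)) (hB : IsTransposedPoisson n 1 B)
    (α : ℕ → ℂ)
    (hα : B.br (nfE n 1) (nfE n 2) = ∑ t ∈ Finset.Icc 1 n, α t • nfE n t) :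
    ∀ i, 2 ≤ i → i ≤ n →
      B.br (nfE n 1) (nfE n i) =
        ∑ t ∈ Finset.Icc (i - 1) n, α (t + 2 - i) • nfE n t := by
  intro i hi2
  induction i, hi2 using Nat.le_induction with
  | base =>
    intro _
    rw [hα]
    refine Finset.sum_congr (by norm_num) fun t _ => ?_
    congr 1
  | succ m hm ih =>
    intro hin
    have hmn : m ≤ n := by omega
    have hBm := ih hmn
    -- relation 1 : z = e₁, x = e₁, y = e_m
    have R1 := hB (nfE n 1) (nfE n m) (nfE n 1)
    rw [one_smul, mul_e_e n 1 1 le_rfl le_rfl,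
        mul_e_e n 1 m le_rfl (by omega), hBm] at R1
    rw [show (1 : ℕ) + 1 = 2 from rfl, show 1 + m = m + 1 from Nat.add_comm 1 m] at R1
    rw [mul_e_sum n 1 (m - 1) le_rfl (by omega)] at R1
    -- relation 2 : z = e_{m-1}, x = e₁, y = e₂
    have R2 := hB (nfE n 1) (nfE n 2) (nfE n (m - 1))
    rw [one_smul, mul_e_e n (m - 1) 1 (by omega) le_rfl,
        mul_e_e n (m - 1) 2 (by omega) (by omega), hα] at R2
    rw [show m - 1 + 1 = m from by omega, show m - 1 + 2 = m + 1 from by omega] at R2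
    rw [mul_e_sum n (m - 1) 1 (by omega) le_rfl] at R2
    rw [br_anticomm B (nfE n 2) (nfE n m)] at R2
    -- normalize the two sums to the goal's RHS
    have E1 : (∑ t ∈ Finset.Icc (m - 1 + 1) n, α (t - 1 + 2 - m) • nfE n t)
        = ∑ t ∈ Finset.Icc (m + 1 - 1) n, α (t + 2 - (m + 1)) • nfE n t := by
      refine Finset.sum_congr (by congr 1 <;> omega) fun t ht => ?_
      rw [Finset.mem_Icc] at ht
      congr 2
      omega
    have E2 : (∑ t ∈ Finset.Icc (1 + (m - 1)) n, α (t - (m - 1)) • nfE n t)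
        = ∑ t ∈ Finset.Icc (m + 1 - 1) n, α (t + 2 - (m + 1)) • nfE n t := by
      refine Finset.sum_congr (by congr 1 <;> omega) fun t ht => ?_
      rw [Finset.mem_Icc] at ht
      congr 2
      omega
    rw [E1] at R1
    rw [E2] at R2
    set T := ∑ t ∈ Finset.Icc (m + 1 - 1) n, α (t + 2 - (m + 1)) • nfE n t with hT
    set X := B.br (nfE n 1) (nfE n (m + 1)) with hX
    have h2 : (2 : ℂ) • T = (2 : ℂ) • X := by
      rw [two_smul, two_smul]
      calc T + T = (B.br (nfE n 2) (nfE n m) + X) + (-B.br (nfE n 2) (nfE n m) + X) := by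
            rw [← R1, ← R2]
        _ = X + X := by abel
    exact (smul_right_injective (Fin n → ℂ) (by norm_num : (2:ℂ) ≠ 0) h2).symm
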